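/- arXiv:math/0207071 — 2 statements merged into one kernel-verified Lean document; each statement's English description precedes it below -/
import Mathlib

section
/- Let n ≥ 1 and let α > 0 be a real number. Define μ : ℂ^{n+1} ∖ {0} → ℝ^{n+1} by μ(z)_i = α|z_i|² / (Σ_{j=0}^n |z_j|²). Let z = (0, z_1, …, z_n) with z_i ≠ 0 for i = 1, …, n, and let r_i = α|z_i|/(1+|z_i|²) for i = 1, …, n. Then the product r_1 ⋯ r_n is maximal (over all such z) if and only if |z_1| = ⋯ = |z_n| = 1, and in that case μ(z) = (α/n)(0, 1, …, 1) = q_0, the center point of the facet V_0. -/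
lemma aux_le (α : ℝ) (hα : 0 < α) (t : ℝ) : α * t / (1 + t ^ 2) ≤ α / 2 := by
  have h1 : (0:ℝ) < 1 + t ^ 2 := by positivity
  rw [div_le_div_iff₀ h1 (by norm_num)]
  nlinarith [sq_nonneg (t - 1)]

lemma aux_lt (α : ℝ) (hα : 0 < α) (t : ℝ) (ht : t ≠ 1) :
    α * t / (1 + t ^ 2) < α / 2 := by
  have h1 : (0:ℝ) < 1 + t ^ 2 := by positivity
  have h2 : 0 < (t - 1) ^ 2 :=
    lt_of_le_of_ne (sq_nonneg _) (Ne.symm (pow_ne_zero 2 (sub_ne_zero.mpr ht)))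
  rw [div_lt_div_iff₀ h1 (by norm_num)]
  nlinarith

/-- the paper's Lemma: for `z = (0, z_1, …, z_n)` with all `z_i ≠ 0`
(`i ≥ 1`), the product of the radii `r_i = α|z_i|/(1+|z_i|²)` is maximal over all such
`z` iff `|z_i| = 1` for all `i ≥ 1`, and in that case the moment map sends `z` to
`q_0 = (α/n)(0,1,…,1)`, the center of the facet `V_0`. -/
theorem stmt1 (n : ℕ) (hn : 1 ≤ n) (α : ℝ) (hα : 0 < α)
    (μ : (Fin (n + 1) → ℂ) → (Fin (n + 1) → ℝ))
    (hμ : ∀ z, μ z = fun i => α * ‖z i‖ ^ 2 / ∑ j, ‖z j‖ ^ 2)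
    (z : Fin (n + 1) → ℂ) (hz0 : z 0 = 0) (hz : ∀ i, i ≠ 0 → z i ≠ 0) :
    ((∀ w : Fin (n + 1) → ℂ, w 0 = 0 → (∀ i, i ≠ 0 → w i ≠ 0) →
        ∏ i ∈ Finset.univ.erase 0,
            α * ‖w i‖ / (1 + ‖w i‖ ^ 2) ≤
          ∏ i ∈ Finset.univ.erase 0,
            α * ‖z i‖ / (1 + ‖z i‖ ^ 2))
      ↔ ∀ i, i ≠ 0 → ‖z i‖ = 1) ∧
    ((∀ i, i ≠ 0 → ‖z i‖ = 1) →
      μ z = fun i => if i = 0 then 0 else α / n) := by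
  set S := Finset.univ.erase (0 : Fin (n + 1)) with hS
  have hmem : ∀ i ∈ S, i ≠ 0 := fun i hi => Finset.ne_of_mem_erase hi
  constructor
  · constructor
    · -- maximality → all moduli 1
      intro h
      -- test function: all entries 1 except index 0
      set w : Fin (n + 1) → ℂ := fun i => if i = 0 then 0 else 1 with hw
      have hw0 : w 0 = 0 := by simp [hw]
      have hwne : ∀ i, i ≠ 0 → w i ≠ 0 := by intro i hi; simp [hw, hi]
      have hkey := h w hw0 hwne
      have hwprod : ∏ i ∈ S, α * ‖w i‖ / (1 + ‖w i‖ ^ 2)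
          = ∏ i ∈ S, (α / 2) := by
        refine Finset.prod_congr rfl fun i hi => ?_
        simp [hw, hmem i hi]
        ring
      rw [hwprod] at hkey
      by_contra hcon
      push_neg at hcon
      obtain ⟨i₀, hi₀ne, hi₀⟩ := hcon
      have hi₀S : i₀ ∈ S := Finset.mem_erase.mpr ⟨hi₀ne, Finset.mem_univ _⟩
      have hlt : ∏ i ∈ S, α * ‖z i‖ / (1 + ‖z i‖ ^ 2)
          < ∏ i ∈ S, (α / 2) := by
        refine Finset.prod_lt_prod ?_ ?_ ⟨i₀, hi₀S, ?_⟩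
        · intro i hi
          have hzi : ‖z i‖ ≠ 0 := norm_ne_zero_iff.mpr (hz i (hmem i hi))
          have : 0 < ‖z i‖ := lt_of_le_of_ne (norm_nonneg _) (Ne.symm hzi)
          positivity
        · intro i _; exact aux_le α hα _
        · exact aux_lt α hα _ hi₀
      exact absurd hkey (not_le.mpr hlt)
    · -- all moduli 1 → maximality
      intro h w hw0 hwne
      have hz2 : ∏ i ∈ S, α * ‖z i‖ / (1 + ‖z i‖ ^ 2)
          = ∏ i ∈ S, (α / 2) := by
        refine Finset.prod_congr rfl fun i hi => ?_
        rw [h i (hmem i hi)]; ring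
      rw [hz2]
      refine Finset.prod_le_prod (fun i _ => by positivity) (fun i _ => aux_le α hα _)
  · intro h
    rw [hμ]
    have hsum : ∑ j, ‖z j‖ ^ 2 = (n : ℝ) := by
      have h1 : ∑ i ∈ S, ‖z i‖ ^ 2 = ∑ i ∈ S, (1 : ℝ) :=
        Finset.sum_congr rfl fun i hi => by rw [h i (hmem i hi), one_pow]
      rw [← Finset.sum_erase_add _ _ (Finset.mem_univ (0 : Fin (n + 1))), hz0, ← hS, h1]
      simp [hS, Finset.card_erase_of_mem]
    funext i
    rw [hsum]
    by_cases hi : i = 0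
    · simp [hi, hz0]
    · rw [h i hi]
      simp [hi]
end

section
/- Let n ≥ 1 and let α > 0 be a real number. In ℝ^{n+1} with the standard inner product, let Δ = convexHull{α e_0, …, α e_n}, let s = (α/(n+1))(1, …, 1) be its center, and let H = { x ∈ ℝ^{n+1} : Σ_{i=0}^n x_i = 0 }. Then the polar-dual set { x ∈ H : ⟨x, y − s⟩ ≤ 1 for all y ∈ Δ } equals { x ∈ H : x_i ≤ 1/α for all i }, and this set is the convex hull of the n+1 points u_i = (1/α)((1, …, 1) − (n+1) e_i), i = 0, …, n. -/
/-- in `ℝ^{n+1}` with the standard inner product, the polar dual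
(in the hyperplane `H = {∑ x_i = 0}`, with center `s = (α/(n+1))(1,…,1)`) of the
moment polytope `Δ = convexHull{α e_0, …, α e_n}` is `{x ∈ H : x_i ≤ 1/α ∀i}`, which
is the convex hull of the points `u_i = (1/α)((1,…,1) − (n+1) e_i)`. -/
theorem stmt11 (n : ℕ) (hn : 1 ≤ n) (α : ℝ) (hα : 0 < α) :
    ({x : Fin (n + 1) → ℝ | (∑ i, x i = 0) ∧
        ∀ y ∈ convexHull ℝ
          (Set.range fun i : Fin (n + 1) => α • (Pi.single i 1 : Fin (n + 1) → ℝ)),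
          ∑ i, x i * (y i - α / ((n : ℝ) + 1)) ≤ 1} =
      {x : Fin (n + 1) → ℝ | (∑ i, x i = 0) ∧ ∀ i, x i ≤ 1 / α}) ∧
    ({x : Fin (n + 1) → ℝ | (∑ i, x i = 0) ∧ ∀ i, x i ≤ 1 / α} =
      convexHull ℝ (Set.range fun i : Fin (n + 1) =>
        (1 / α) • ((fun _ => 1 : Fin (n + 1) → ℝ) -
          ((n : ℝ) + 1) • (Pi.single i 1 : Fin (n + 1) → ℝ)))) := by
  have hα' : (α : ℝ) ≠ 0 := ne_of_gt hα
  have hn1 : ((n : ℝ) + 1) ≠ 0 := by positivity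
  -- key computation: for x with sum 0, the functional simplifies
  have key : ∀ (x y : Fin (n + 1) → ℝ), (∑ i, x i = 0) →
      ∑ i, x i * (y i - α / ((n : ℝ) + 1)) = ∑ i, x i * y i := by
    intro x y hx
    have : ∑ i, x i * (y i - α / ((n : ℝ) + 1))
        = ∑ i, (x i * y i - (α / ((n : ℝ) + 1)) * x i) := by
      apply Finset.sum_congr rfl; intro i _; ring
    rw [this, Finset.sum_sub_distrib, ← Finset.mul_sum, hx, mul_zero, sub_zero]
  constructor
  · ext x
    simp only [Set.mem_setOf_eq]
    constructor
    · rintro ⟨hs, hy⟩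
      refine ⟨hs, fun i => ?_⟩
      have h := hy (α • (Pi.single i 1 : Fin (n + 1) → ℝ))
        (subset_convexHull ℝ _ ⟨i, rfl⟩)
      rw [key x _ hs] at h
      have hsum : ∑ j, x j * (α • (Pi.single i 1 : Fin (n + 1) → ℝ)) j = x i * α := by
        simp [Pi.single_apply, mul_ite, mul_comm, Finset.sum_ite_eq]
      rw [hsum] at h
      rwa [le_div_iff₀ hα]
    · rintro ⟨hs, hx⟩
      refine ⟨hs, fun y hy => ?_⟩
      rw [key x y hs]
      -- the halfspace {y | ∑ x i * y i ≤ 1} is convex and contains the vertices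
      have hconv : Convex ℝ {y : Fin (n + 1) → ℝ | ∑ i, x i * y i ≤ 1} := by
        intro y hy z hz a b ha hb hab
        simp only [Set.mem_setOf_eq] at *
        have : ∑ i, x i * (a • y + b • z) i = a * (∑ i, x i * y i) + b * (∑ i, x i * z i) := by
          rw [Finset.mul_sum, Finset.mul_sum, ← Finset.sum_add_distrib]
          apply Finset.sum_congr rfl; intro i _
          simp [Pi.add_apply, Pi.smul_apply, smul_eq_mul]; ring
        rw [this]
        calc a * (∑ i, x i * y i) + b * (∑ i, x i * z i)
            ≤ a * 1 + b * 1 := by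
              gcongr
          _ = 1 := by rw [mul_one, mul_one, hab]
      have hsub : Set.range (fun i : Fin (n + 1) => α • (Pi.single i 1 : Fin (n + 1) → ℝ))
          ⊆ {y : Fin (n + 1) → ℝ | ∑ i, x i * y i ≤ 1} := by
        rintro _ ⟨i, rfl⟩
        simp only [Set.mem_setOf_eq]
        have hsum : ∑ j, x j * (α • (Pi.single i 1 : Fin (n + 1) → ℝ)) j = x i * α := by
          simp [Pi.single_apply, mul_ite, mul_comm, Finset.sum_ite_eq]
        rw [hsum, ← le_div_iff₀ hα]
        exact hx i
      exact convexHull_min hsub hconv hy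
  · set f : Fin (n + 1) → (Fin (n + 1) → ℝ) := fun i =>
      (1 / α) • ((fun _ => 1 : Fin (n + 1) → ℝ) -
        ((n : ℝ) + 1) • (Pi.single i 1 : Fin (n + 1) → ℝ)) with hf
    have hfval : ∀ i j, f i j = (1 / α) * (1 - ((n : ℝ) + 1) * (if j = i then 1 else 0)) := by
      intro i j
      simp [hf, Pi.single_apply]
    apply Set.Subset.antisymm
    · rintro x ⟨hs, hx⟩
      set w : Fin (n + 1) → ℝ := fun i => (1 - α * x i) / ((n : ℝ) + 1) with hw
      have hw0 : ∀ i, 0 ≤ w i := by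
        intro i
        apply div_nonneg _ (by positivity)
        have := (le_div_iff₀ hα).mp (hx i)
        linarith [this]
      have hw1 : ∑ i, w i = 1 := by
        simp only [hw]
        rw [← Finset.sum_div, Finset.sum_sub_distrib, ← Finset.mul_sum, hs, mul_zero, sub_zero]
        simp [Finset.card_univ]
        field_simp
        exact hn1
      have hmem := Finset.centerMass_mem_convexHull Finset.univ
        (fun i _ => hw0 i) (by rw [hw1]; norm_num)
        (fun i (_ : i ∈ Finset.univ) => Set.mem_range_self (f := f) i)
      rw [Finset.centerMass_eq_of_sum_1 _ _ hw1] at hmem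
      have hxeq : x = ∑ i, w i • f i := by
        funext j
        rw [Finset.sum_apply]
        have : ∀ i, (w i • f i) j = w i * (1/α) - (1/α) * ((n:ℝ)+1) * (if j = i then w i else 0) := by
          intro i
          rw [Pi.smul_apply, smul_eq_mul, hfval]
          by_cases h : j = i <;> simp [h] <;> ring
        rw [Finset.sum_congr rfl (fun i _ => this i), Finset.sum_sub_distrib,
          ← Finset.sum_mul, hw1, ← Finset.mul_sum, Finset.sum_ite_eq, if_pos (Finset.mem_univ j)]
        simp only [hw]
        field_simp
        ring
      rw [hxeq]; exact hmem
    · apply convexHull_min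
      · rintro _ ⟨i, rfl⟩
        constructor
        · have : ∑ j, f i j = 0 := by
            simp only [hfval]
            rw [← Finset.mul_sum, Finset.sum_sub_distrib, ← Finset.mul_sum]
            simp [Finset.card_univ]
          simpa using this
        · intro j
          rw [hfval]
          by_cases h : j = i
          · rw [if_pos h, mul_one]
            have h1 : (0:ℝ) < 1 / α := by positivity
            nlinarith [mul_nonneg h1.le (by positivity : (0:ℝ) ≤ (n:ℝ) + 1)]
          · simp [h]
      · -- convexity of the set
        have h1 : Convex ℝ {x : Fin (n + 1) → ℝ | ∑ i, x i = 0} := by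
          intro y hy z hz a b ha hb hab
          simp only [Set.mem_setOf_eq] at *
          simp only [Pi.add_apply, Pi.smul_apply, smul_eq_mul]
          rw [Finset.sum_add_distrib, ← Finset.mul_sum, ← Finset.mul_sum, hy, hz]
          simp
        have h2 : Convex ℝ {x : Fin (n + 1) → ℝ | ∀ i, x i ≤ 1 / α} := by
          intro y hy z hz a b ha hb hab
          intro i
          simp only [Pi.add_apply, Pi.smul_apply, smul_eq_mul]
          calc a * y i + b * z i ≤ a * (1/α) + b * (1/α) := by gcongr; exacts [hy i, hz i]
            _ = 1/α := by rw [← add_mul, hab, one_mul]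
        exact fun y hy z hz a b ha hb hab => ⟨h1 hy.1 hz.1 ha hb hab, h2 hy.2 hz.2 ha hb hab⟩
end
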